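/- For the Grushin inversion, the Grushin Laplacian of the coordinate functions satisfies Σ_{k=1}^N ∂²x_i/∂x̃_k² + |x̃|^{2γ} Σ_{h=1}^l ∂²x_i/∂ỹ_h² = (2(2 - N - l - lγ)/(1+γ)²) x̃_i |x̃|^{2γ} d(z̃,0)^{-4-2γ} for each i. -/

import Mathlib

open MeasureTheory Real

noncomputable section

variable {N l : ℕ}

/-- squared Euclidean norm -/
def nsq {n : ℕ} (x : Fin n → ℝ) : ℝ := ∑ i, x i ^ 2

/-- partial derivative in the `i`-th `x` direction -/
def pdx (u : (Fin N → ℝ) × (Fin l → ℝ) → ℝ) (i : Fin N)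
    (z : (Fin N → ℝ) × (Fin l → ℝ)) : ℝ :=
  deriv (fun t => u (Function.update z.1 i t, z.2)) (z.1 i)

/-- partial derivative in the `j`-th `y` direction -/
def pdy (u : (Fin N → ℝ) × (Fin l → ℝ) → ℝ) (j : Fin l)
    (z : (Fin N → ℝ) × (Fin l → ℝ)) : ℝ :=
  deriv (fun t => u (z.1, Function.update z.2 j t)) (z.2 j)

/-- Grushin operator `Δ_γ u = Δ_x u + |x|^{2γ} Δ_y u` -/
def grushinLap (γ : ℝ) (u : (Fin N → ℝ) × (Fin l → ℝ) → ℝ)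
    (z : (Fin N → ℝ) × (Fin l → ℝ)) : ℝ :=
  (∑ i, pdx (pdx u i) i z) + (nsq z.1) ^ γ * ∑ j, pdy (pdy u j) j z

/-- the Grushin distance to the origin:
`d(z,0) = ((1/(1+γ)²)|x|^{2+2γ} + |y|²)^{1/(2+2γ)}` (note `|x|^{2+2γ} = (nsq x)^{1+γ}`). -/
def gd (γ : ℝ) (z : (Fin N → ℝ) × (Fin l → ℝ)) : ℝ :=
  ((1 / (1 + γ) ^ 2) * (nsq z.1) ^ (1 + γ) + nsq z.2) ^ (1 / (2 + 2 * γ))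

/-- the Grushin inversion `x̃ = x/d², ỹ = y/d^{2+2γ}` -/
def ginv (γ : ℝ) (z : (Fin N → ℝ) × (Fin l → ℝ)) : (Fin N → ℝ) × (Fin l → ℝ) :=
  (fun i => z.1 i / gd γ z ^ 2, fun j => z.2 j / gd γ z ^ (2 + 2 * γ))

/-- divergence of a vector field on `ℝ^N × ℝ^l` -/
def gdiv (X : (Fin N → ℝ) × (Fin l → ℝ) → (Fin N → ℝ) × (Fin l → ℝ))
    (z : (Fin N → ℝ) × (Fin l → ℝ)) : ℝ :=
  (∑ i, pdx (fun w => (X w).1 i) i z) + ∑ j, pdy (fun w => (X w).2 j) j z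

/-- Euclidean dot product on `ℝ^N × ℝ^l` -/
def gdot (v w : (Fin N → ℝ) × (Fin l → ℝ)) : ℝ :=
  (∑ i, v.1 i * w.1 i) + ∑ j, v.2 j * w.2 j

/-! ### Auxiliary lemmas -/

lemma nsq_nonneg {n : ℕ} (x : Fin n → ℝ) : 0 ≤ nsq x :=
  Finset.sum_nonneg fun _ _ => sq_nonneg _

lemma nsq_pos {n : ℕ} {x : Fin n → ℝ} (hx : x ≠ 0) : 0 < nsq x := by
  rcases (nsq_nonneg x).lt_or_eq with h | h
  · exact h
  · exfalso; apply hx; funext j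
    have h2 := (Finset.sum_eq_zero_iff_of_nonneg
      (fun i (_ : i ∈ Finset.univ) => sq_nonneg (x i))).mp h.symm j (Finset.mem_univ j)
    have : x j = 0 := by nlinarith [sq_nonneg (x j)]
    simpa using this

lemma nsq_update {n : ℕ} (x : Fin n → ℝ) (k : Fin n) (t : ℝ) :
    nsq (Function.update x k t) = nsq x - x k ^ 2 + t ^ 2 := by
  have h1 : ∀ v : ℝ, nsq (Function.update x k v)
      = v ^ 2 + ∑ j ∈ Finset.univ.erase k, x j ^ 2 := by
    intro v
    unfold nsq
    rw [← Finset.add_sum_erase _ _ (Finset.mem_univ k)]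
    congr 1
    · simp
    · exact Finset.sum_congr rfl fun j hj => by
        rw [Function.update_of_ne (Finset.ne_of_mem_erase hj)]
  have h2 := h1 (x k)
  rw [Function.update_eq_self] at h2
  rw [h1 t, h2]; ring

lemma pdx_pdx (f : (Fin N → ℝ) × (Fin l → ℝ) → ℝ) (k : Fin N)
    (z : (Fin N → ℝ) × (Fin l → ℝ)) :
    pdx (pdx f k) k z
      = deriv (deriv fun t => f (Function.update z.1 k t, z.2)) (z.1 k) := by
  unfold pdx
  congr 1
  funext t
  simp [Function.update_idem]

lemma pdy_pdy (f : (Fin N → ℝ) × (Fin l → ℝ) → ℝ) (h : Fin l)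
    (z : (Fin N → ℝ) × (Fin l → ℝ)) :
    pdy (pdy f h) h z
      = deriv (deriv fun t => f (z.1, Function.update z.2 h t)) (z.2 h) := by
  unfold pdy
  congr 1
  funext t
  simp [Function.update_idem]

lemma hasDerivAt_q (a c Y : ℝ) (ha : 0 < a) (t : ℝ) (ht : 0 < c + t ^ 2) :
    HasDerivAt (fun t => 1 / a ^ 2 * (c + t ^ 2) ^ a + Y)
      (2 / a * (c + t ^ 2) ^ (a - 1) * t) t := by
  have h1 : HasDerivAt (fun t : ℝ => c + t ^ 2) (2 * t) t := by
    simpa using (hasDerivAt_pow 2 t).const_add c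
  have h3 := ((h1.rpow_const (p := a) (Or.inl ht.ne')).const_mul (1 / a ^ 2)).add_const Y
  refine h3.congr_deriv ?_
  field_simp

lemma gderiv1 (a c Y X δ : ℝ) (ha : 0 < a) (hY : 0 ≤ Y) (t : ℝ) (ht : 0 < c + t ^ 2) :
    HasDerivAt
      (fun t => (X + δ * t) * (1 / a ^ 2 * (c + t ^ 2) ^ a + Y) ^ (-(1 / a)))
      (δ * (1 / a ^ 2 * (c + t ^ 2) ^ a + Y) ^ (-(1 / a))
        + (X + δ * t) * (2 / a * (c + t ^ 2) ^ (a - 1) * t * (-(1 / a))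
            * (1 / a ^ 2 * (c + t ^ 2) ^ a + Y) ^ (-(1 / a) - 1))) t := by
  have hQ : 0 < 1 / a ^ 2 * (c + t ^ 2) ^ a + Y :=
    add_pos_of_pos_of_nonneg (mul_pos (by positivity) (rpow_pos_of_pos ht a)) hY
  have h1 := (hasDerivAt_q a c Y ha t ht).rpow_const (p := -(1 / a)) (Or.inl hQ.ne')
  have h2 : HasDerivAt (fun t : ℝ => X + δ * t) δ t := by
    simpa using ((hasDerivAt_id t).const_mul δ).const_add X
  exact h2.mul h1

lemma xsecond (a c Y X δ : ℝ) (ha : 0 < a) (hY : 0 ≤ Y) (t0 : ℝ)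
    (ht0 : 0 < c + t0 ^ 2) :
    deriv (deriv
      (fun t => (X + δ * t) * (1 / a ^ 2 * (c + t ^ 2) ^ a + Y) ^ (-(1 / a)))) t0
      = -(4 / a ^ 2) * δ * t0 * (c + t0 ^ 2) ^ (a - 1)
          * (1 / a ^ 2 * (c + t0 ^ 2) ^ a + Y) ^ (-(1 / a) - 1)
        + (X + δ * t0) *
          ( (4 * (1 + a) / a ^ 4) * t0 ^ 2 * (c + t0 ^ 2) ^ (a - 1) * (c + t0 ^ 2) ^ (a - 1)
              * (1 / a ^ 2 * (c + t0 ^ 2) ^ a + Y) ^ (-(1 / a) - 1 - 1)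
            - (2 / a ^ 2) * (2 * (a - 1) * t0 ^ 2 * (c + t0 ^ 2) ^ (a - 1 - 1)
                + (c + t0 ^ 2) ^ (a - 1))
              * (1 / a ^ 2 * (c + t0 ^ 2) ^ a + Y) ^ (-(1 / a) - 1) ) := by
  have hQ : 0 < 1 / a ^ 2 * (c + t0 ^ 2) ^ a + Y :=
    add_pos_of_pos_of_nonneg (mul_pos (by positivity) (rpow_pos_of_pos ht0 a)) hY
  set φ : ℝ → ℝ := fun t =>
      δ * (1 / a ^ 2 * (c + t ^ 2) ^ a + Y) ^ (-(1 / a))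
        + (X + δ * t) * (2 / a * (c + t ^ 2) ^ (a - 1) * t * (-(1 / a))
            * (1 / a ^ 2 * (c + t ^ 2) ^ a + Y) ^ (-(1 / a) - 1)) with hφ
  have hev : deriv (fun t => (X + δ * t) * (1 / a ^ 2 * (c + t ^ 2) ^ a + Y) ^ (-(1 / a)))
      =ᶠ[nhds t0] φ := by
    have hop : IsOpen {t : ℝ | 0 < c + t ^ 2} :=
      isOpen_lt continuous_const (by continuity)
    filter_upwards [hop.eventually_mem ht0] with t ht
    exact (gderiv1 a c Y X δ ha hY t ht).deriv
  rw [Filter.EventuallyEq.deriv_eq hev]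
  have hq := hasDerivAt_q a c Y ha t0 ht0
  have hqp := hq.rpow_const (p := -(1 / a)) (Or.inl hQ.ne')
  have hqp1 := hq.rpow_const (p := -(1 / a) - 1) (Or.inl hQ.ne')
  have hs : HasDerivAt (fun t : ℝ => c + t ^ 2) (2 * t0) t0 := by
    simpa using (hasDerivAt_pow 2 t0).const_add c
  have hw1 := hs.rpow_const (p := a - 1) (Or.inl ht0.ne')
  have hE : HasDerivAt (fun t : ℝ => X + δ * t) δ t0 := by
    simpa using ((hasDerivAt_id t0).const_mul δ).const_add X
  have hB : HasDerivAt (fun t : ℝ => 2 / a * (c + t ^ 2) ^ (a - 1) * t)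
      ((2 / a * (2 * t0 * (a - 1) * (c + t0 ^ 2) ^ (a - 1 - 1))) * t0
        + 2 / a * (c + t0 ^ 2) ^ (a - 1) * 1) t0 :=
    (hw1.const_mul (2 / a)).mul (hasDerivAt_id t0)
  have hC : HasDerivAt (fun t : ℝ =>
      2 / a * (c + t ^ 2) ^ (a - 1) * t * (-(1 / a))
        * (1 / a ^ 2 * (c + t ^ 2) ^ a + Y) ^ (-(1 / a) - 1)) _ t0 :=
    (hB.mul_const (-(1 / a))).mul hqp1
  have htot : HasDerivAt φ _ t0 := (hqp.const_mul δ).add (hE.mul hC)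
  rw [htot.deriv]
  field_simp
  ring

lemma ysecond (a K X : ℝ) (ha : 0 < a) (hK : 0 < K) (t0 : ℝ) :
    deriv (deriv (fun t => X * (K + t ^ 2) ^ (-(1 / a)))) t0
      = X * ( (4 / a) * (1 / a + 1) * t0 ^ 2 * (K + t0 ^ 2) ^ (-(1 / a) - 1 - 1)
          - (2 / a) * (K + t0 ^ 2) ^ (-(1 / a) - 1) ) := by
  have hpos : ∀ t : ℝ, 0 < K + t ^ 2 := fun t => by positivity
  have hs : ∀ t : ℝ, HasDerivAt (fun t : ℝ => K + t ^ 2) (2 * t) t := fun t => by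
    simpa using (hasDerivAt_pow 2 t).const_add K
  have h1 : ∀ t : ℝ, HasDerivAt (fun t => X * (K + t ^ 2) ^ (-(1 / a)))
      (X * (2 * t * -(1 / a) * (K + t ^ 2) ^ (-(1 / a) - 1))) t := fun t =>
    (((hs t).rpow_const (p := -(1 / a)) (Or.inl (hpos t).ne')).const_mul X)
  have hev : deriv (fun t => X * (K + t ^ 2) ^ (-(1 / a)))
      = fun t => X * (2 * t * -(1 / a) * (K + t ^ 2) ^ (-(1 / a) - 1)) :=
    funext fun t => (h1 t).deriv
  rw [hev]
  have hqp1 := (hs t0).rpow_const (p := -(1 / a) - 1) (Or.inl (hpos t0).ne')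
  have hid : HasDerivAt (fun t : ℝ => 2 * t) 2 t0 := by
    simpa using (hasDerivAt_id t0).const_mul 2
  have htot : HasDerivAt
      (fun t => X * (2 * t * -(1 / a) * (K + t ^ 2) ^ (-(1 / a) - 1))) _ t0 :=
    (((hid.mul_const (-(1 / a))).mul hqp1).const_mul X)
  rw [htot.deriv]
  field_simp
  ring

lemma ginv_x_eq (γ : ℝ) (hγ : 0 ≤ γ) (w : (Fin N → ℝ) × (Fin l → ℝ)) (i : Fin N) :
    (ginv γ w).1 i
      = w.1 i * (1 / (1 + γ) ^ 2 * nsq w.1 ^ (1 + γ) + nsq w.2) ^ (-(1 / (1 + γ))) := by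
  have h1γ : (0:ℝ) < 1 + γ := by linarith
  have h2γ : (0:ℝ) < 2 + 2 * γ := by linarith
  have hP : (0:ℝ) ≤ 1 / (1 + γ) ^ 2 * nsq w.1 ^ (1 + γ) + nsq w.2 :=
    add_nonneg (mul_nonneg (by positivity) (Real.rpow_nonneg (nsq_nonneg _) _)) (nsq_nonneg _)
  simp only [ginv, gd]
  rw [← Real.rpow_natCast ((1 / (1 + γ) ^ 2 * nsq w.1 ^ (1 + γ) + nsq w.2) ^ (1 / (2 + 2 * γ))) 2,
      ← Real.rpow_mul hP]
  rw [show 1 / (2 + 2 * γ) * ((2:ℕ):ℝ) = 1 / (1 + γ) from by push_cast; field_simp]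
  rw [Real.rpow_neg hP, div_eq_mul_inv]

lemma final_algebra (γ S Y2 xi : ℝ) (n m : ℕ) (hγ : 0 ≤ γ) (hS : 0 < S) (hY : 0 ≤ Y2) :
    (-(4 / (1 + γ) ^ 2) * xi * S ^ (1 + γ - 1)
        * (1 / (1 + γ) ^ 2 * S ^ (1 + γ) + Y2) ^ (-(1 / (1 + γ)) - 1)
      + (xi * ((4 * (1 + (1 + γ)) / (1 + γ) ^ 4) * S ^ (1 + γ - 1) * S ^ (1 + γ - 1)
              * (1 / (1 + γ) ^ 2 * S ^ (1 + γ) + Y2) ^ (-(1 / (1 + γ)) - 1 - 1)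
            - 2 / (1 + γ) ^ 2 * (2 * (1 + γ - 1) * S ^ (1 + γ - 1 - 1))
              * (1 / (1 + γ) ^ 2 * S ^ (1 + γ) + Y2) ^ (-(1 / (1 + γ)) - 1)) * S
        + n * (xi * (-(2 / (1 + γ) ^ 2) * S ^ (1 + γ - 1)
              * (1 / (1 + γ) ^ 2 * S ^ (1 + γ) + Y2) ^ (-(1 / (1 + γ)) - 1)))))
    + S ^ γ *
      (xi * (4 / (1 + γ)) * (1 / (1 + γ) + 1)
          * (1 / (1 + γ) ^ 2 * S ^ (1 + γ) + Y2) ^ (-(1 / (1 + γ)) - 1 - 1) * Y2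
        + m * (xi * (-(2 / (1 + γ)))
            * (1 / (1 + γ) ^ 2 * S ^ (1 + γ) + Y2) ^ (-(1 / (1 + γ)) - 1)))
    = 2 * (2 - (n : ℝ) - m - m * γ) / (1 + γ) ^ 2 * xi * S ^ γ *
        ((1 / (1 + γ) ^ 2 * S ^ (1 + γ) + Y2) ^ (1 / (2 + 2 * γ))) ^ (-4 - 2 * γ) := by
  have h1γ : (0:ℝ) < 1 + γ := by linarith
  have h2γ : (0:ℝ) < 2 + 2 * γ := by linarith
  have hQ : (0:ℝ) < 1 / (1 + γ) ^ 2 * S ^ (1 + γ) + Y2 :=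
    add_pos_of_pos_of_nonneg (mul_pos (by positivity) (Real.rpow_pos_of_pos hS _)) hY
  rw [← Real.rpow_mul hQ.le]
  rw [show 1 / (2 + 2 * γ) * (-4 - 2 * γ) = -(1 / (1 + γ)) - 1 from by field_simp; ring]
  have hP1 : (1 / (1 + γ) ^ 2 * S ^ (1 + γ) + Y2) ^ (-(1 / (1 + γ)) - 1)
      = (1 / (1 + γ) ^ 2 * S ^ (1 + γ) + Y2) ^ (-(1 / (1 + γ)) - 1 - 1)
        * (1 / (1 + γ) ^ 2 * S ^ (1 + γ) + Y2) := by
    rw [← Real.rpow_add_one hQ.ne' (-(1 / (1 + γ)) - 1 - 1)]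
    congr 1; ring
  have hE1 : S ^ (1 + γ - 1) = S ^ (1 + γ - 1 - 1) * S := by
    rw [← Real.rpow_add_one hS.ne' (1 + γ - 1 - 1)]; congr 1; ring
  have hg : S ^ γ = S ^ (1 + γ - 1 - 1) * S := by
    rw [← Real.rpow_add_one hS.ne' (1 + γ - 1 - 1)]; congr 1; ring
  have hA : S ^ (1 + γ) = S ^ (1 + γ - 1 - 1) * S * S := by
    rw [← Real.rpow_add_one hS.ne' (1 + γ - 1 - 1), ← Real.rpow_add_one hS.ne']
    congr 1; ring
  rw [hP1, hE1, hg, hA]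
  field_simp
  ring

/-- Grushin Laplacian of the `x`-coordinates of the Grushin inversion. -/
theorem ginv_grushinLap_x (γ : ℝ) (hγ : 0 ≤ γ)
    (z : (Fin N → ℝ) × (Fin l → ℝ)) (hx : z.1 ≠ 0) (i : Fin N) :
    grushinLap γ (fun w => (ginv γ w).1 i) z
      = (2 * (2 - (N : ℝ) - l - l * γ) / (1 + γ) ^ 2) * z.1 i * (nsq z.1) ^ γ *
          gd γ z ^ (-4 - 2 * γ) := by
  have h1γ : (0:ℝ) < 1 + γ := by linarith
  have hS : 0 < nsq z.1 := nsq_pos hx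
  unfold grushinLap
  have hxterm : ∀ k : Fin N,
      pdx (pdx (fun w => (ginv γ w).1 i) k) k z
        = (if i = k then
            -(4 / (1 + γ) ^ 2) * z.1 k * nsq z.1 ^ (1 + γ - 1)
              * (1 / (1 + γ) ^ 2 * nsq z.1 ^ (1 + γ) + nsq z.2) ^ (-(1 / (1 + γ)) - 1)
          else 0)
          + ((z.1 i * ((4 * (1 + (1 + γ)) / (1 + γ) ^ 4)
                  * nsq z.1 ^ (1 + γ - 1) * nsq z.1 ^ (1 + γ - 1)
                  * (1 / (1 + γ) ^ 2 * nsq z.1 ^ (1 + γ) + nsq z.2) ^ (-(1 / (1 + γ)) - 1 - 1)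
                - 2 / (1 + γ) ^ 2 * (2 * (1 + γ - 1) * nsq z.1 ^ (1 + γ - 1 - 1))
                  * (1 / (1 + γ) ^ 2 * nsq z.1 ^ (1 + γ) + nsq z.2) ^ (-(1 / (1 + γ)) - 1)))
              * z.1 k ^ 2
            + z.1 i * (-(2 / (1 + γ) ^ 2) * nsq z.1 ^ (1 + γ - 1)
                * (1 / (1 + γ) ^ 2 * nsq z.1 ^ (1 + γ) + nsq z.2) ^ (-(1 / (1 + γ)) - 1))) := by
    intro k
    rw [pdx_pdx]
    have hfun : (fun t => (fun w => (ginv γ w).1 i) (Function.update z.1 k t, z.2))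
        = fun t => ((if i = k then 0 else z.1 i) + (if i = k then (1:ℝ) else 0) * t)
            * (1 / (1 + γ) ^ 2 * (nsq z.1 - z.1 k ^ 2 + t ^ 2) ^ (1 + γ) + nsq z.2)
              ^ (-(1 / (1 + γ))) := by
      funext t
      show (ginv γ (Function.update z.1 k t, z.2)).1 i = _
      rw [ginv_x_eq γ hγ]
      simp only [nsq_update, Function.update_apply]
      split_ifs with h <;> ring
    rw [hfun,
      xsecond (1 + γ) (nsq z.1 - z.1 k ^ 2) (nsq z.2) _ _ h1γ (nsq_nonneg z.2) (z.1 k)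
        (by linarith)]
    rw [show nsq z.1 - z.1 k ^ 2 + z.1 k ^ 2 = nsq z.1 from by ring]
    split_ifs with h
    · rw [h]; ring
    · ring
  have hyterm : ∀ h : Fin l,
      pdy (pdy (fun w => (ginv γ w).1 i) h) h z
        = (z.1 i * (4 / (1 + γ)) * (1 / (1 + γ) + 1)
              * (1 / (1 + γ) ^ 2 * nsq z.1 ^ (1 + γ) + nsq z.2) ^ (-(1 / (1 + γ)) - 1 - 1))
            * z.2 h ^ 2
          + z.1 i * (-(2 / (1 + γ)))
              * (1 / (1 + γ) ^ 2 * nsq z.1 ^ (1 + γ) + nsq z.2) ^ (-(1 / (1 + γ)) - 1) := by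
    intro h
    rw [pdy_pdy]
    have hKpos : 0 < 1 / (1 + γ) ^ 2 * nsq z.1 ^ (1 + γ) + (nsq z.2 - z.2 h ^ 2) := by
      have h0 : 0 ≤ nsq z.2 - z.2 h ^ 2 := by
        have := nsq_nonneg (Function.update z.2 h 0)
        rw [nsq_update] at this
        nlinarith [this]
      have h1 : 0 < 1 / (1 + γ) ^ 2 * nsq z.1 ^ (1 + γ) :=
        mul_pos (by positivity) (Real.rpow_pos_of_pos hS _)
      linarith
    have hfun : (fun t => (fun w => (ginv γ w).1 i) (z.1, Function.update z.2 h t))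
        = fun t => z.1 i
            * ((1 / (1 + γ) ^ 2 * nsq z.1 ^ (1 + γ) + (nsq z.2 - z.2 h ^ 2)) + t ^ 2)
              ^ (-(1 / (1 + γ))) := by
      funext t
      show (ginv γ (z.1, Function.update z.2 h t)).1 i = _
      rw [ginv_x_eq γ hγ]
      simp only [nsq_update]
      congr 1
      congr 1
      ring
    rw [hfun, ysecond (1 + γ) _ (z.1 i) h1γ hKpos (z.2 h)]
    rw [show 1 / (1 + γ) ^ 2 * nsq z.1 ^ (1 + γ) + (nsq z.2 - z.2 h ^ 2) + z.2 h ^ 2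
        = 1 / (1 + γ) ^ 2 * nsq z.1 ^ (1 + γ) + nsq z.2 from by ring]
    ring
  simp only [hxterm, hyterm]
  rw [Finset.sum_add_distrib, Finset.sum_ite_eq]
  simp only [Finset.mem_univ, if_true]
  rw [Finset.sum_add_distrib, ← Finset.mul_sum, Finset.sum_const, Finset.card_univ,
    Fintype.card_fin, nsmul_eq_mul]
  rw [Finset.sum_add_distrib, ← Finset.mul_sum, Finset.sum_const, Finset.card_univ,
    Fintype.card_fin, nsmul_eq_mul]
  have hn1 : ∑ k, z.1 k ^ 2 = nsq z.1 := rfl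
  have hn2 : ∑ h, z.2 h ^ 2 = nsq z.2 := rfl
  rw [hn1, hn2]
  simp only [gd]
  exact final_algebra γ (nsq z.1) (nsq z.2) (z.1 i) N l hγ hS (nsq_nonneg _)
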